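/- For an irreducible, aperiodic, positive recurrent Markov chain on a countable state space with stationary distribution π, the n-step transition distributions converge in total variation: for every state x, lim_{n→∞} ‖P^n(x, ·) − π‖_TV = 0. -/

import Mathlib

open Filter
open scoped BigOperators Topology

/-- The `n`-step transition probabilities of a Markov kernel on a countable space. -/
noncomputable def nstep {S : Type*} [DecidableEq S] (P : S → S → ℝ) : ℕ → S → S → ℝ
  | 0 => fun i j => if i = j then 1 else 0
  | n + 1 => fun i j => ∑' k, nstep P n i k * P k j

/-- Tail probabilities that two independent copies of the chain, started at `x` and `y`,
have not yet coupled (met) within `n` steps. -/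
noncomputable def ucoup {S : Type*} [DecidableEq S] (P : S → S → ℝ) : ℕ → S → S → ℝ
  | 0 => fun x y => if x = y then 0 else 1
  | n + 1 => fun x y => if x = y then 0 else
      ∑' kl : S × S, P x kl.1 * P y kl.2 * ucoup P n kl.1 kl.2

/-- The limit of the non-coupling probabilities. -/
noncomputable def Ulim {S : Type*} [DecidableEq S] (P : S → S → ℝ) (x y : S) : ℝ :=
  ⨅ n, ucoup P n x y

namespace MCAux
set_option linter.unusedSectionVars false
set_option maxHeartbeats 1000000

variable {S : Type*} [DecidableEq S] {P : S → S → ℝ}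

/-! ### Fubini helpers for nonnegative reals -/

lemma summable_uncurry_nn {A B : Type*} {f : A → B → ℝ} (h0 : ∀ a b, 0 ≤ f a b)
    (h1 : ∀ a, Summable (f a)) (h2 : Summable fun a => ∑' b, f a b) :
    Summable (fun p : A × B => f p.1 p.2) :=
  (summable_prod_of_nonneg (fun p => h0 p.1 p.2)).2 ⟨h1, h2⟩

lemma summable_snd_nn {A B : Type*} {f : A → B → ℝ} (h0 : ∀ a b, 0 ≤ f a b)
    (h1 : ∀ a, Summable (f a)) (h2 : Summable fun a => ∑' b, f a b) :
    Summable (fun b => ∑' a, f a b) :=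
  ((summable_prod_of_nonneg (fun p : B × A => h0 p.2 p.1)).1
    (summable_uncurry_nn h0 h1 h2).prod_symm).2

lemma tsum_swap_nn {A B : Type*} {f : A → B → ℝ} (h0 : ∀ a b, 0 ≤ f a b)
    (h1 : ∀ a, Summable (f a)) (h2 : Summable fun a => ∑' b, f a b) :
    ∑' a, ∑' b, f a b = ∑' b, ∑' a, f a b :=
  (Summable.tsum_comm (summable_uncurry_nn h0 h1 h2)).symm

/-! ### Basic facts about `nstep` -/

variable {S : Type*} [DecidableEq S] {P : S → S → ℝ}

lemma P_le_one (hP0 : ∀ i j, 0 ≤ P i j) (hP1 : ∀ i, HasSum (P i) 1) (i j : S) :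
    P i j ≤ 1 :=
  le_hasSum (hP1 i) j (fun k _ => hP0 i k)

lemma nstep_nonneg (hP0 : ∀ i j, 0 ≤ P i j) : ∀ n i j, 0 ≤ nstep P n i j := by
  intro n
  induction n with
  | zero => intro i j; simp only [nstep]; positivity
  | succ n ih =>
      intro i j
      exact tsum_nonneg fun k => mul_nonneg (ih i k) (hP0 k j)

lemma nstep_hasSum (hP0 : ∀ i j, 0 ≤ P i j) (hP1 : ∀ i, HasSum (P i) 1) :
    ∀ n i, HasSum (nstep P n i) 1 := by
  intro n
  induction n with
  | zero =>
      intro i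
      simpa [nstep, eq_comm] using hasSum_ite_eq i (1 : ℝ)
  | succ n ih =>
      intro i
      have hf : Summable (nstep P n i) := (ih i).summable
      set g : S → S → ℝ := fun a b => nstep P n i a * P a b with hg
      have h0 : ∀ a b, 0 ≤ g a b := fun a b => mul_nonneg (nstep_nonneg hP0 n i a) (hP0 a b)
      have h1 : ∀ a, Summable (g a) := fun a => (hP1 a).summable.mul_left _
      have h2 : Summable fun a => ∑' b, g a b := by
        have : (fun a => ∑' b, g a b) = nstep P n i := by
          funext a
          rw [hg]
          rw [tsum_mul_left, (hP1 a).tsum_eq, mul_one]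
        rw [this]; exact hf
      have hsum : Summable (nstep P (n + 1) i) := by
        have : nstep P (n + 1) i = fun b => ∑' a, g a b := rfl
        rw [this]; exact summable_snd_nn h0 h1 h2
      have htsum : ∑' j, nstep P (n + 1) i j = 1 := by
        have e1 : ∑' j, nstep P (n + 1) i j = ∑' b, ∑' a, g a b := rfl
        rw [e1, ← tsum_swap_nn h0 h1 h2]
        have : ∀ a, ∑' b, g a b = nstep P n i a := by
          intro a; rw [hg]; rw [tsum_mul_left, (hP1 a).tsum_eq, mul_one]
        rw [tsum_congr this, (ih i).tsum_eq]
      exact htsum ▸ hsum.hasSum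

lemma nstep_summable (hP0 : ∀ i j, 0 ≤ P i j) (hP1 : ∀ i, HasSum (P i) 1) (n : ℕ) (i : S) :
    Summable (nstep P n i) := (nstep_hasSum hP0 hP1 n i).summable

lemma nstep_le_one (hP0 : ∀ i j, 0 ≤ P i j) (hP1 : ∀ i, HasSum (P i) 1) (n : ℕ) (i j : S) :
    nstep P n i j ≤ 1 :=
  le_hasSum (nstep_hasSum hP0 hP1 n i) j (fun k _ => nstep_nonneg hP0 n i k)

lemma nstep_one (i j : S) : nstep P 1 i j = P i j := by
  have : nstep P 1 i j = ∑' k, (if i = k then (1 : ℝ) else 0) * P k j := rfl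
  rw [this, tsum_eq_single i (fun k hk => by simp [Ne.symm hk])]
  simp


lemma nstep_tsum_one (hP0 : ∀ i j, 0 ≤ P i j) (hP1 : ∀ i, HasSum (P i) 1) (n : ℕ) (i : S) :
    ∑' j, nstep P n i j = 1 := (nstep_hasSum hP0 hP1 n i).tsum_eq

lemma summable_mul_nstep (hP0 : ∀ i j, 0 ≤ P i j) (hP1 : ∀ i, HasSum (P i) 1)
    (a b : ℕ) (i : S) (j : S) :
    Summable fun k => nstep P a i k * nstep P b k j :=
  Summable.of_nonneg_of_le
    (fun k => mul_nonneg (nstep_nonneg hP0 a i k) (nstep_nonneg hP0 b k j))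
    (fun k => mul_le_of_le_one_right (nstep_nonneg hP0 a i k) (nstep_le_one hP0 hP1 b k j))
    (nstep_summable hP0 hP1 a i)

lemma nstep_add (hP0 : ∀ i j, 0 ≤ P i j) (hP1 : ∀ i, HasSum (P i) 1) (a b : ℕ) (i j : S) :
    nstep P (a + b) i j = ∑' k, nstep P a i k * nstep P b k j := by
  induction b generalizing j with
  | zero =>
      rw [Nat.add_zero]
      rw [tsum_eq_single j (fun k hk => by simp [nstep, hk])]
      simp [nstep]
  | succ b ih =>
      have e0 : nstep P (a + (b + 1)) i j = ∑' m, nstep P (a + b) i m * P m j := rfl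
      rw [e0]
      have e1 : ∀ m, nstep P (a + b) i m * P m j
          = ∑' k, nstep P a i k * (nstep P b k m * P m j) := by
        intro m
        rw [ih m, ← Summable.tsum_mul_right _ (summable_mul_nstep hP0 hP1 a b i m)]
        exact tsum_congr fun k => mul_assoc _ _ _
      rw [tsum_congr e1]
      have h0 : ∀ m k, 0 ≤ nstep P a i k * (nstep P b k m * P m j) := fun m k =>
        mul_nonneg (nstep_nonneg hP0 a i k)
          (mul_nonneg (nstep_nonneg hP0 b k m) (hP0 m j))
      have hinner : ∀ k, Summable fun m => nstep P a i k * (nstep P b k m * P m j) := by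
        intro k
        refine Summable.mul_left _ ?_
        exact Summable.of_nonneg_of_le
          (fun m => mul_nonneg (nstep_nonneg hP0 b k m) (hP0 m j))
          (fun m => mul_le_of_le_one_right (nstep_nonneg hP0 b k m)
            (le_hasSum (hP1 m) j (fun r _ => hP0 m r)))
          (nstep_summable hP0 hP1 b k)
      have hmid : ∀ k, ∑' m, nstep P a i k * (nstep P b k m * P m j)
          = nstep P a i k * nstep P (b + 1) k j := by
        intro k
        rw [tsum_mul_left]
        rfl
      have houter : Summable fun k => ∑' m, nstep P a i k * (nstep P b k m * P m j) := by
        rw [show (fun k => ∑' m, nstep P a i k * (nstep P b k m * P m j))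
            = fun k => nstep P a i k * nstep P (b + 1) k j from funext hmid]
        exact summable_mul_nstep hP0 hP1 a (b + 1) i j
      rw [← tsum_swap_nn (fun k m => h0 m k) hinner houter]
      exact tsum_congr hmid

lemma nstep_mul_pos (hP0 : ∀ i j, 0 ≤ P i j) (hP1 : ∀ i, HasSum (P i) 1)
    {a b : ℕ} {i k j : S} (ha : 0 < nstep P a i k) (hb : 0 < nstep P b k j) :
    0 < nstep P (a + b) i j := by
  rw [nstep_add hP0 hP1 a b i j]
  calc (0:ℝ) < nstep P a i k * nstep P b k j := mul_pos ha hb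
    _ ≤ ∑' k', nstep P a i k' * nstep P b k' j :=
        Summable.le_tsum (summable_mul_nstep hP0 hP1 a b i j) k
          (fun k' _ => mul_nonneg (nstep_nonneg hP0 a i k') (nstep_nonneg hP0 b k' j))

lemma bezout_finset (R : Set ℕ) (M : AddSubmonoid ℕ) (hRM : R ⊆ M) :
    ∀ F : Finset ℕ, ↑F ⊆ R →
      ∃ x ∈ M, ∃ y ∈ M, (x : ℤ) - y = ((F.gcd id : ℕ) : ℤ) := by
  intro F
  induction F using Finset.induction_on with
  | empty => intro _; exact ⟨0, zero_mem M, 0, zero_mem M, by simp⟩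
  | @insert a F ha ih =>
      intro hsub
      have haR : a ∈ R := hsub (Finset.mem_insert_self a F)
      have haM : a ∈ M := hRM haR
      obtain ⟨x, hx, y, hy, hxy⟩ := ih (fun z hz => hsub (Finset.mem_insert_of_mem hz))
      set g : ℕ := F.gcd id with hgdef
      have hgins : (insert a F).gcd id = Nat.gcd a g := by
        rw [Finset.gcd_insert]; rfl
      rw [hgins]
      have hbez : (Nat.gcd a g : ℤ) = a * Nat.gcdA a g + g * Nat.gcdB a g :=
        Nat.gcd_eq_gcd_ab a g
      set s : ℤ := Nat.gcdA a g
      set t : ℤ := Nat.gcdB a g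
      refine ⟨s.toNat * a + t.toNat * x + (-t).toNat * y, ?_,
              (-s).toNat * a + (-t).toNat * x + t.toNat * y, ?_, ?_⟩
      · exact add_mem (add_mem (nsmul_mem haM _) (nsmul_mem hx _)) (nsmul_mem hy _)
      · exact add_mem (add_mem (nsmul_mem haM _) (nsmul_mem hx _)) (nsmul_mem hy _)
      · have hs : (s.toNat : ℤ) - (-s).toNat = s := by omega
        have ht : (t.toNat : ℤ) - (-t).toNat = t := by omega
        push_cast
        nlinarith [hs, ht, hbez, hxy]

lemma addclosed_cofinite {R : Set ℕ} (hadd : ∀ a ∈ R, ∀ b ∈ R, a + b ∈ R)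
    (hpos : ∀ a ∈ R, 1 ≤ a) (hne : R.Nonempty)
    (hgcd : ∀ d : ℕ, (∀ n ∈ R, d ∣ n) → d = 1) :
    ∃ N, ∀ n, N ≤ n → n ∈ R := by
  classical
  set M : AddSubmonoid ℕ := AddSubmonoid.closure R with hM
  have hRM : R ⊆ M := AddSubmonoid.subset_closure
  -- elements of M are 0 or in R
  have hMsub : ∀ m ∈ M, m = 0 ∨ m ∈ R := by
    intro m hm
    induction hm using AddSubmonoid.closure_induction with
    | mem z hz => exact Or.inr hz
    | zero => exact Or.inl rfl
    | add z w _ _ hz hw =>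
        rcases hz with rfl | hz
        · simpa using hw
        · rcases hw with rfl | hw
          · exact Or.inr (by simpa using hz)
          · exact Or.inr (hadd z hz w hw)
  -- a finite subset with gcd 1
  obtain ⟨a, haR⟩ := hne
  set T : Set ℕ := {g | ∃ F : Finset ℕ, ↑F ⊆ R ∧ F.Nonempty ∧ F.gcd id = g} with hT
  have hTne : T.Nonempty := ⟨a, {a}, by simpa using haR, ⟨a, by simp⟩, by simp⟩
  set g0 : ℕ := sInf T with hg0
  have hg0T : g0 ∈ T := Nat.sInf_mem hTne
  obtain ⟨F0, hF0R, hF0ne, hF0g⟩ := hg0T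
  have hg0pos : 0 < g0 := by
    rcases hF0ne with ⟨b, hb⟩
    have hbR : b ∈ R := hF0R hb
    have : g0 ∣ b := hF0g ▸ Finset.gcd_dvd hb
    have := hpos b hbR
    exact Nat.pos_of_dvd_of_pos ‹g0 ∣ b› (by omega)
  have hdvd : ∀ n ∈ R, g0 ∣ n := by
    intro n hn
    by_contra hnd
    have hmem : Nat.gcd n g0 ∈ T := by
      refine ⟨insert n F0, ?_, ⟨n, Finset.mem_insert_self n F0⟩, ?_⟩
      · intro z hz
        rcases Finset.mem_insert.1 (by exact_mod_cast hz) with rfl | hz'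
        · exact hn
        · exact hF0R hz'
      · rw [Finset.gcd_insert, hF0g]; rfl
    have hle : g0 ≤ Nat.gcd n g0 := Nat.sInf_le hmem
    have hdl : Nat.gcd n g0 ∣ g0 := Nat.gcd_dvd_right n g0
    have hle2 : Nat.gcd n g0 ≤ g0 := Nat.le_of_dvd hg0pos hdl
    have heq : Nat.gcd n g0 = g0 := le_antisymm hle2 hle
    exact hnd (heq ▸ Nat.gcd_dvd_left n g0)
  have hg01 : g0 = 1 := hgcd g0 hdvd
  -- Bezout: x, y ∈ M with x - y = 1
  obtain ⟨x, hxM, y, hyM, hxy⟩ := bezout_finset R M hRM F0 hF0R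
  rw [hF0g, hg01] at hxy
  have hx_eq : x = y + 1 := by omega
  -- y and y+1 in M give cofiniteness
  refine ⟨y * y + 1, fun n hn => ?_⟩
  have hn1 : 1 ≤ n := le_trans (Nat.le_add_left 1 (y * y)) hn
  have hnM : n ∈ M := by
    by_cases hy0 : y = 0
    · subst hy0
      have h1M : (1 : ℕ) ∈ M := by simpa [hx_eq] using hxM
      have := nsmul_mem h1M n
      simpa using this
    · have hypos : 1 ≤ y := Nat.one_le_iff_ne_zero.2 hy0
      set q : ℕ := n / y
      set r : ℕ := n % y
      have hr : r < y := Nat.mod_lt _ (by omega)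
      have hqr : y * q + r = n := Nat.div_add_mod n y
      have hq : y ≤ q := by
        have : y * y ≤ n := by omega
        exact Nat.le_div_iff_mul_le (by omega) |>.2 (by nlinarith)
      have hrepr : n = r * x + (q - r) * y := by
        have hrq : r ≤ q := le_trans (le_of_lt hr) hq
        zify [hrq, hx_eq]
        nlinarith [hqr]
      rw [hrepr]
      exact add_mem (nsmul_mem hxM r) (nsmul_mem hyM (q - r))
  rcases hMsub n hnM with rfl | h
  · omega
  · exact h

/-! ### products of summable nonnegative families -/

lemma prodmul_summable {A : Type*} {f g : A → ℝ} (hf : Summable f) (hg : Summable g)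
    (hf0 : ∀ i, 0 ≤ f i) (hg0 : ∀ i, 0 ≤ g i) :
    Summable (fun p : A × A => f p.1 * g p.2) := by
  refine summable_uncurry_nn (f := fun a b => f a * g b)
    (fun a b => mul_nonneg (hf0 a) (hg0 b)) (fun a => hg.mul_left _) ?_
  have e : (fun x => ∑' y, f x * g y) = fun x => f x * (∑' y, g y) := by
    funext x; rw [tsum_mul_left]
  rw [e]; exact hf.mul_right _

lemma prodmul_tsum {A : Type*} {f g : A → ℝ} (hf : Summable f) (hg : Summable g)
    (hf0 : ∀ i, 0 ≤ f i) (hg0 : ∀ i, 0 ≤ g i) :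
    ∑' p : A × A, f p.1 * g p.2 = (∑' i, f i) * (∑' j, g j) := by
  rw [Summable.tsum_prod (prodmul_summable hf hg hf0 hg0)]
  simp_rw [tsum_mul_left]
  rw [Summable.tsum_mul_right _ hf]

lemma prodker_summable (hP0 : ∀ i j, 0 ≤ P i j) (hP1 : ∀ i, HasSum (P i) 1) (x y : S) :
    Summable (fun kl : S × S => P x kl.1 * P y kl.2) :=
  prodmul_summable (hP1 x).summable (hP1 y).summable (hP0 x) (hP0 y)

lemma prodker_tsum (hP0 : ∀ i j, 0 ≤ P i j) (hP1 : ∀ i, HasSum (P i) 1) (x y : S) :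
    ∑' kl : S × S, P x kl.1 * P y kl.2 = 1 := by
  rw [prodmul_tsum (hP1 x).summable (hP1 y).summable (hP0 x) (hP0 y),
    (hP1 x).tsum_eq, (hP1 y).tsum_eq, mul_one]

/-! ### basic properties of `ucoup` -/

lemma ucoup_nonneg (hP0 : ∀ i j, 0 ≤ P i j) : ∀ n x y, 0 ≤ ucoup P n x y := by
  intro n
  induction n with
  | zero => intro x y; simp only [ucoup]; positivity
  | succ n ih =>
      intro x y
      simp only [ucoup]
      split
      · exact le_refl 0
      · exact tsum_nonneg fun kl => mul_nonneg
          (mul_nonneg (hP0 x kl.1) (hP0 y kl.2)) (ih kl.1 kl.2)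

lemma ucoup_le_one (hP0 : ∀ i j, 0 ≤ P i j) (hP1 : ∀ i, HasSum (P i) 1) :
    ∀ n x y, ucoup P n x y ≤ 1 := by
  intro n
  induction n with
  | zero => intro x y; simp only [ucoup]; split <;> norm_num
  | succ n ih =>
      intro x y
      simp only [ucoup]
      split
      · norm_num
      · calc ∑' kl : S × S, P x kl.1 * P y kl.2 * ucoup P n kl.1 kl.2
            ≤ ∑' kl : S × S, P x kl.1 * P y kl.2 := by
              refine Summable.tsum_le_tsum (fun kl => ?_) ?_ (prodker_summable hP0 hP1 x y)
              · exact mul_le_of_le_one_right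
                  (mul_nonneg (hP0 x kl.1) (hP0 y kl.2)) (ih kl.1 kl.2)
              · exact Summable.of_nonneg_of_le
                  (fun kl => mul_nonneg (mul_nonneg (hP0 x kl.1) (hP0 y kl.2))
                    (ucoup_nonneg hP0 n kl.1 kl.2))
                  (fun kl => mul_le_of_le_one_right
                    (mul_nonneg (hP0 x kl.1) (hP0 y kl.2)) (ih kl.1 kl.2))
                  (prodker_summable hP0 hP1 x y)
          _ = 1 := prodker_tsum hP0 hP1 x y

lemma ucoup_summand_summable (hP0 : ∀ i j, 0 ≤ P i j) (hP1 : ∀ i, HasSum (P i) 1)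
    (n : ℕ) (x y : S) :
    Summable (fun kl : S × S => P x kl.1 * P y kl.2 * ucoup P n kl.1 kl.2) :=
  Summable.of_nonneg_of_le
    (fun kl => mul_nonneg (mul_nonneg (hP0 x kl.1) (hP0 y kl.2))
      (ucoup_nonneg hP0 n kl.1 kl.2))
    (fun kl => mul_le_of_le_one_right (mul_nonneg (hP0 x kl.1) (hP0 y kl.2))
      (ucoup_le_one hP0 hP1 n kl.1 kl.2))
    (prodker_summable hP0 hP1 x y)

lemma ucoup_succ_le (hP0 : ∀ i j, 0 ≤ P i j) (hP1 : ∀ i, HasSum (P i) 1) :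
    ∀ n x y, ucoup P (n + 1) x y ≤ ucoup P n x y := by
  intro n
  induction n with
  | zero =>
      intro x y
      by_cases hxy : x = y
      · simp [ucoup, hxy]
      · simpa [ucoup, hxy] using ucoup_le_one hP0 hP1 1 x y
  | succ n ih =>
      intro x y
      by_cases hxy : x = y
      · simp [ucoup, hxy]
      · simp only [ucoup, if_neg hxy]
        refine Summable.tsum_le_tsum (fun kl => ?_)
          (ucoup_summand_summable hP0 hP1 (n + 1) x y)
          (ucoup_summand_summable hP0 hP1 n x y)
        exact mul_le_mul_of_nonneg_left (ih kl.1 kl.2)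
          (mul_nonneg (hP0 x kl.1) (hP0 y kl.2))

lemma ucoup_antitone (hP0 : ∀ i j, 0 ≤ P i j) (hP1 : ∀ i, HasSum (P i) 1) (x y : S) :
    Antitone fun n => ucoup P n x y :=
  antitone_nat_of_succ_le fun n => ucoup_succ_le hP0 hP1 n x y

lemma ucoup_diag (n : ℕ) (x : S) : ucoup P n x x = 0 := by
  cases n <;> simp [ucoup]

lemma abs_diff_le_one {a b : ℝ} (ha0 : 0 ≤ a) (ha1 : a ≤ 1) (hb0 : 0 ≤ b) (hb1 : b ≤ 1) :
    |a - b| ≤ 1 :=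
  abs_le.2 ⟨by linarith, by linarith⟩

lemma summable_absdiff (hP0 : ∀ i j, 0 ≤ P i j) (hP1 : ∀ i, HasSum (P i) 1)
    (n : ℕ) (x y : S) :
    Summable fun j => |nstep P n x j - nstep P n y j| := by
  refine Summable.of_nonneg_of_le (fun j => abs_nonneg _) (fun j => ?_)
    ((nstep_summable hP0 hP1 n x).add (nstep_summable hP0 hP1 n y))
  calc |nstep P n x j - nstep P n y j| ≤ |nstep P n x j| + |nstep P n y j| := by
        rw [sub_eq_add_neg]; exact (abs_add_le _ _).trans (by rw [abs_neg])
    _ = nstep P n x j + nstep P n y j := by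
        rw [abs_of_nonneg (nstep_nonneg hP0 n x j), abs_of_nonneg (nstep_nonneg hP0 n y j)]

lemma tsum_absdiff_le_two (hP0 : ∀ i j, 0 ≤ P i j) (hP1 : ∀ i, HasSum (P i) 1)
    (n : ℕ) (x y : S) :
    (∑' j, |nstep P n x j - nstep P n y j|) ≤ 2 := by
  calc (∑' j, |nstep P n x j - nstep P n y j|)
      ≤ ∑' j, (nstep P n x j + nstep P n y j) := by
        refine Summable.tsum_le_tsum (fun j => ?_) (summable_absdiff hP0 hP1 n x y)
          ((nstep_summable hP0 hP1 n x).add (nstep_summable hP0 hP1 n y))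
        calc |nstep P n x j - nstep P n y j| ≤ |nstep P n x j| + |nstep P n y j| := by
              rw [sub_eq_add_neg]; exact (abs_add_le _ _).trans (by rw [abs_neg])
          _ = nstep P n x j + nstep P n y j := by
              rw [abs_of_nonneg (nstep_nonneg hP0 n x j),
                abs_of_nonneg (nstep_nonneg hP0 n y j)]
    _ = 2 := by
        rw [Summable.tsum_add (nstep_summable hP0 hP1 n x) (nstep_summable hP0 hP1 n y),
          nstep_tsum_one hP0 hP1 n x, nstep_tsum_one hP0 hP1 n y]
        norm_num

lemma nstep_succ_pair_fst (hP0 : ∀ i j, 0 ≤ P i j) (hP1 : ∀ i, HasSum (P i) 1)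
    (n : ℕ) (x y j : S) :
    nstep P (n + 1) x j = ∑' kl : S × S, P x kl.1 * P y kl.2 * nstep P n kl.1 j := by
  have h1 : nstep P (n + 1) x j = ∑' k, P x k * nstep P n k j := by
    have h := nstep_add hP0 hP1 1 n x j
    rw [Nat.add_comm 1 n] at h
    simp_rw [nstep_one] at h
    exact h
  have e : ∀ k, (fun l => P x k * P y l * nstep P n k j)
      = fun l => (P x k * nstep P n k j) * P y l := by
    intro k; funext l; ring
  have hinner : ∀ k, ∑' l, P x k * P y l * nstep P n k j = P x k * nstep P n k j := by
    intro k
    rw [e k, tsum_mul_left, (hP1 y).tsum_eq, mul_one]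
  have h0 : ∀ k l, 0 ≤ P x k * P y l * nstep P n k j := fun k l =>
    mul_nonneg (mul_nonneg (hP0 x k) (hP0 y l)) (nstep_nonneg hP0 n k j)
  have hs1 : ∀ k, Summable fun l => P x k * P y l * nstep P n k j := by
    intro k; rw [e k]; exact ((hP1 y).summable).mul_left _
  have hs2 : Summable fun k => ∑' l, P x k * P y l * nstep P n k j := by
    rw [show (fun k => ∑' l, P x k * P y l * nstep P n k j)
        = fun k => P x k * nstep P n k j from funext hinner]
    exact Summable.of_nonneg_of_le
      (fun k => mul_nonneg (hP0 x k) (nstep_nonneg hP0 n k j))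
      (fun k => mul_le_of_le_one_right (hP0 x k) (nstep_le_one hP0 hP1 n k j))
      (hP1 x).summable
  rw [Summable.tsum_prod (summable_uncurry_nn h0 hs1 hs2), tsum_congr hinner, h1]

lemma nstep_succ_pair_snd (hP0 : ∀ i j, 0 ≤ P i j) (hP1 : ∀ i, HasSum (P i) 1)
    (n : ℕ) (x y j : S) :
    nstep P (n + 1) y j = ∑' kl : S × S, P x kl.1 * P y kl.2 * nstep P n kl.2 j := by
  have h1 : nstep P (n + 1) y j = ∑' l, P y l * nstep P n l j := by
    have h := nstep_add hP0 hP1 1 n y j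
    rw [Nat.add_comm 1 n] at h
    simp_rw [nstep_one] at h
    exact h
  have e : ∀ k, (fun l => P x k * P y l * nstep P n l j)
      = fun l => P x k * (P y l * nstep P n l j) := by
    intro k; funext l; ring
  have hys : Summable fun l => P y l * nstep P n l j :=
    Summable.of_nonneg_of_le
      (fun l => mul_nonneg (hP0 y l) (nstep_nonneg hP0 n l j))
      (fun l => mul_le_of_le_one_right (hP0 y l) (nstep_le_one hP0 hP1 n l j))
      (hP1 y).summable
  have hinner : ∀ k, ∑' l, P x k * P y l * nstep P n l j
      = P x k * nstep P (n + 1) y j := by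
    intro k
    rw [e k, tsum_mul_left, ← h1]
  have h0 : ∀ k l, 0 ≤ P x k * P y l * nstep P n l j := fun k l =>
    mul_nonneg (mul_nonneg (hP0 x k) (hP0 y l)) (nstep_nonneg hP0 n l j)
  have hs1 : ∀ k, Summable fun l => P x k * P y l * nstep P n l j := by
    intro k; rw [e k]; exact hys.mul_left _
  have hs2 : Summable fun k => ∑' l, P x k * P y l * nstep P n l j := by
    rw [show (fun k => ∑' l, P x k * P y l * nstep P n l j)
        = fun k => P x k * nstep P (n + 1) y j from funext hinner]
    exact (hP1 x).summable.mul_right _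
  rw [Summable.tsum_prod (summable_uncurry_nn h0 hs1 hs2), tsum_congr hinner, tsum_mul_right,
    (hP1 x).tsum_eq, one_mul]

theorem coupling_ineq (hP0 : ∀ i j, 0 ≤ P i j) (hP1 : ∀ i, HasSum (P i) 1) :
    ∀ n x y, (∑' j, |nstep P n x j - nstep P n y j|) ≤ 2 * ucoup P n x y := by
  intro n
  induction n with
  | zero =>
      intro x y
      by_cases hxy : x = y
      · subst hxy
        simp [ucoup]
      · have hfe : (fun j => |nstep P 0 x j - nstep P 0 y j|)
            = fun j => (if j = x then (1:ℝ) else 0) + (if j = y then (1:ℝ) else 0) := by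
          funext j
          by_cases hjx : j = x
          · subst hjx
            simp only [nstep, if_pos rfl]
            rw [if_neg (show ¬y = j from fun h => hxy h.symm),
              if_neg (show ¬j = y from hxy)]
            norm_num
          · by_cases hjy : j = y
            · subst hjy
              simp only [nstep, if_pos rfl, if_neg hjx]
              rw [if_neg (show ¬x = j from fun h => hjx h.symm)]
              norm_num
            · simp only [nstep, if_neg hjx, if_neg hjy]
              rw [if_neg (show ¬x = j from fun h => hjx h.symm),
                if_neg (show ¬y = j from fun h => hjy h.symm)]
              norm_num
        rw [hfe, Summable.tsum_add ((hasSum_ite_eq x (1:ℝ)).summable) ((hasSum_ite_eq y (1:ℝ)).summable),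
          (hasSum_ite_eq x (1:ℝ)).tsum_eq, (hasSum_ite_eq y (1:ℝ)).tsum_eq]
        simp only [ucoup, if_neg hxy]
        norm_num
  | succ n ih =>
      intro x y
      by_cases hxy : x = y
      · subst hxy
        simp [ucoup]
      · set A : S → S → ℝ := nstep P n with hA
        set W : S × S → ℝ := fun kl => P x kl.1 * P y kl.2 with hW
        have hW0 : ∀ kl, 0 ≤ W kl := fun kl => mul_nonneg (hP0 x kl.1) (hP0 y kl.2)
        have hWs : Summable W := prodker_summable hP0 hP1 x y
        -- pointwise difference decomposition
        have hS1 : ∀ j, Summable fun kl : S × S => W kl * A kl.1 j := by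
          intro j
          exact Summable.of_nonneg_of_le
            (fun kl => mul_nonneg (hW0 kl) (nstep_nonneg hP0 n kl.1 j))
            (fun kl => mul_le_of_le_one_right (hW0 kl) (nstep_le_one hP0 hP1 n kl.1 j))
            hWs
        have hS2 : ∀ j, Summable fun kl : S × S => W kl * A kl.2 j := by
          intro j
          exact Summable.of_nonneg_of_le
            (fun kl => mul_nonneg (hW0 kl) (nstep_nonneg hP0 n kl.2 j))
            (fun kl => mul_le_of_le_one_right (hW0 kl) (nstep_le_one hP0 hP1 n kl.2 j))
            hWs
        have hdiff : ∀ j, nstep P (n+1) x j - nstep P (n+1) y j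
            = ∑' kl : S × S, W kl * (A kl.1 j - A kl.2 j) := by
          intro j
          rw [nstep_succ_pair_fst hP0 hP1 n x y j, nstep_succ_pair_snd hP0 hP1 n x y j,
            ← Summable.tsum_sub (hS1 j) (hS2 j)]
          exact tsum_congr fun kl => (mul_sub _ _ _).symm
        have habsb : ∀ (j : S) (kl : S × S), |A kl.1 j - A kl.2 j| ≤ 1 := fun j kl =>
          abs_diff_le_one (nstep_nonneg hP0 n kl.1 j) (nstep_le_one hP0 hP1 n kl.1 j)
            (nstep_nonneg hP0 n kl.2 j) (nstep_le_one hP0 hP1 n kl.2 j)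
        have hSabs : ∀ j, Summable fun kl : S × S => W kl * |A kl.1 j - A kl.2 j| := by
          intro j
          exact Summable.of_nonneg_of_le
            (fun kl => mul_nonneg (hW0 kl) (abs_nonneg _))
            (fun kl => mul_le_of_le_one_right (hW0 kl) (habsb j kl))
            hWs
        have habs : ∀ j, |nstep P (n+1) x j - nstep P (n+1) y j|
            ≤ ∑' kl : S × S, W kl * |A kl.1 j - A kl.2 j| := by
          intro j
          rw [hdiff j]
          have hnorm : Summable fun kl : S × S => ‖W kl * (A kl.1 j - A kl.2 j)‖ := by
            have : (fun kl : S × S => ‖W kl * (A kl.1 j - A kl.2 j)‖)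
                = fun kl => W kl * |A kl.1 j - A kl.2 j| := by
              funext kl
              rw [Real.norm_eq_abs, abs_mul, abs_of_nonneg (hW0 kl)]
            rw [this]; exact hSabs j
          calc |∑' kl : S × S, W kl * (A kl.1 j - A kl.2 j)|
              ≤ ∑' kl : S × S, ‖W kl * (A kl.1 j - A kl.2 j)‖ := by
                rw [← Real.norm_eq_abs]
                exact norm_tsum_le_tsum_norm hnorm
            _ = ∑' kl : S × S, W kl * |A kl.1 j - A kl.2 j| :=
                tsum_congr fun kl => by
                  rw [Real.norm_eq_abs, abs_mul, abs_of_nonneg (hW0 kl)]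
        -- Fubini setup for F (kl) j := W kl * |A kl.1 j - A kl.2 j|
        have hF0 : ∀ (kl : S × S) (j : S), 0 ≤ W kl * |A kl.1 j - A kl.2 j| :=
          fun kl j => mul_nonneg (hW0 kl) (abs_nonneg _)
        have hF1 : ∀ kl : S × S, Summable fun j => W kl * |A kl.1 j - A kl.2 j| :=
          fun kl => (summable_absdiff hP0 hP1 n kl.1 kl.2).mul_left _
        have hFt : ∀ kl : S × S, ∑' j, W kl * |A kl.1 j - A kl.2 j|
            = W kl * ∑' j, |A kl.1 j - A kl.2 j| := fun kl => tsum_mul_left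
        have hF2 : Summable fun kl : S × S => ∑' j, W kl * |A kl.1 j - A kl.2 j| := by
          rw [show (fun kl : S × S => ∑' j, W kl * |A kl.1 j - A kl.2 j|)
              = fun kl => W kl * ∑' j, |A kl.1 j - A kl.2 j| from funext hFt]
          exact Summable.of_nonneg_of_le
            (fun kl => mul_nonneg (hW0 kl) (tsum_nonneg fun j => abs_nonneg _))
            (fun kl => by
              have := tsum_absdiff_le_two hP0 hP1 n kl.1 kl.2
              calc W kl * ∑' j, |A kl.1 j - A kl.2 j| ≤ W kl * 2 :=
                    mul_le_mul_of_nonneg_left this (hW0 kl)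
                _ = W kl * 2 := rfl)
            (hWs.mul_right 2)
        have hF2' : Summable fun kl : S × S => W kl * ∑' j, |A kl.1 j - A kl.2 j| := by
          rw [← show (fun kl : S × S => ∑' j, W kl * |A kl.1 j - A kl.2 j|)
              = fun kl => W kl * ∑' j, |A kl.1 j - A kl.2 j| from funext hFt]
          exact hF2
        calc (∑' j, |nstep P (n+1) x j - nstep P (n+1) y j|)
            ≤ ∑' j, ∑' kl : S × S, W kl * |A kl.1 j - A kl.2 j| :=
              Summable.tsum_le_tsum habs (summable_absdiff hP0 hP1 (n+1) x y)
                (summable_snd_nn hF0 hF1 hF2)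
          _ = ∑' kl : S × S, ∑' j, W kl * |A kl.1 j - A kl.2 j| :=
              (tsum_swap_nn hF0 hF1 hF2).symm
          _ = ∑' kl : S × S, W kl * ∑' j, |A kl.1 j - A kl.2 j| := tsum_congr hFt
          _ ≤ ∑' kl : S × S, W kl * (2 * ucoup P n kl.1 kl.2) := by
              refine Summable.tsum_le_tsum (fun kl => ?_) hF2' ?_
              · exact mul_le_mul_of_nonneg_left (ih kl.1 kl.2) (hW0 kl)
              · exact Summable.of_nonneg_of_le
                  (fun kl => mul_nonneg (hW0 kl)
                    (mul_nonneg (by norm_num) (ucoup_nonneg hP0 n kl.1 kl.2)))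
                  (fun kl => mul_le_mul_of_nonneg_left
                    (by
                      have := ucoup_le_one hP0 hP1 n kl.1 kl.2
                      linarith) (hW0 kl))
                  (hWs.mul_right 2)
          _ = 2 * ∑' kl : S × S, W kl * ucoup P n kl.1 kl.2 := by
              rw [← tsum_mul_left]
              exact tsum_congr fun kl => by ring
          _ = 2 * ucoup P (n+1) x y := by
              have : ucoup P (n+1) x y = ∑' kl : S × S, W kl * ucoup P n kl.1 kl.2 := by
                simp only [ucoup, if_neg hxy, hW]
              rw [this]

/-! ### Eventual positivity -/

lemma diag_eventually_pos (hP0 : ∀ i j, 0 ≤ P i j) (hP1 : ∀ i, HasSum (P i) 1)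
    (hirr : ∀ i j : S, ∃ n : ℕ, 1 ≤ n ∧ 0 < nstep P n i j)
    (haper : ∀ i : S, ∀ d : ℕ, (∀ n : ℕ, 1 ≤ n → 0 < nstep P n i i → d ∣ n) → d = 1)
    (i : S) : ∃ N, ∀ n, N ≤ n → 0 < nstep P n i i := by
  set R : Set ℕ := {n | 1 ≤ n ∧ 0 < nstep P n i i} with hR
  have hadd : ∀ a ∈ R, ∀ b ∈ R, a + b ∈ R := by
    intro a ha b hb
    have ha1 := ha.1
    have hb1 := hb.1
    exact ⟨by omega, nstep_mul_pos hP0 hP1 ha.2 hb.2⟩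
  have hpos : ∀ a ∈ R, 1 ≤ a := fun a ha => ha.1
  have hne : R.Nonempty := by
    obtain ⟨n, hn1, hnp⟩ := hirr i i
    exact ⟨n, hn1, hnp⟩
  have hgcd : ∀ d : ℕ, (∀ n ∈ R, d ∣ n) → d = 1 := by
    intro d hd
    exact haper i d fun n h1 h2 => hd n ⟨h1, h2⟩
  obtain ⟨N, hN⟩ := addclosed_cofinite hadd hpos hne hgcd
  exact ⟨N, fun n hn => (hN n hn).2⟩

lemma eventually_pos (hP0 : ∀ i j, 0 ≤ P i j) (hP1 : ∀ i, HasSum (P i) 1)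
    (hirr : ∀ i j : S, ∃ n : ℕ, 1 ≤ n ∧ 0 < nstep P n i j)
    (haper : ∀ i : S, ∀ d : ℕ, (∀ n : ℕ, 1 ≤ n → 0 < nstep P n i i → d ∣ n) → d = 1)
    (i j : S) : ∃ N, ∀ n, N ≤ n → 0 < nstep P n i j := by
  obtain ⟨m, _, hm⟩ := hirr i j
  obtain ⟨N, hN⟩ := diag_eventually_pos hP0 hP1 hirr haper i
  refine ⟨N + m, fun n hn => ?_⟩
  have h1 : 0 < nstep P (n - m) i i := hN _ (by omega)
  have h2 : 0 < nstep P ((n - m) + m) i j := nstep_mul_pos hP0 hP1 h1 hm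
  have : (n - m) + m = n := by omega
  rwa [this] at h2

/-! ### limit of the coupling tail probabilities -/

lemma ucoup_tendsto (hP0 : ∀ i j, 0 ≤ P i j) (hP1 : ∀ i, HasSum (P i) 1) (x y : S) :
    Tendsto (fun n => ucoup P n x y) atTop (𝓝 (Ulim P x y)) :=
  tendsto_atTop_ciInf (ucoup_antitone hP0 hP1 x y)
    ⟨0, fun z ⟨n, hn⟩ => hn ▸ ucoup_nonneg hP0 n x y⟩

lemma Ulim_nonneg (hP0 : ∀ i j, 0 ≤ P i j) (x y : S) : 0 ≤ Ulim P x y :=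
  le_ciInf fun n => ucoup_nonneg hP0 n x y

lemma Ulim_le_ucoup (hP0 : ∀ i j, 0 ≤ P i j) (n : ℕ) (x y : S) :
    Ulim P x y ≤ ucoup P n x y :=
  ciInf_le ⟨0, fun z ⟨m, hm⟩ => hm ▸ ucoup_nonneg hP0 m x y⟩ n

lemma Ulim_le_one (hP0 : ∀ i j, 0 ≤ P i j) (hP1 : ∀ i, HasSum (P i) 1) (x y : S) :
    Ulim P x y ≤ 1 :=
  (Ulim_le_ucoup hP0 0 x y).trans (ucoup_le_one hP0 hP1 0 x y)

lemma Ulim_diag (x : S) : Ulim P x x = 0 := by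
  have : (fun n => ucoup P n x x) = fun _ => (0 : ℝ) := funext fun n => ucoup_diag n x
  rw [Ulim, this, ciInf_const]

lemma Ulim_summand_summable (hP0 : ∀ i j, 0 ≤ P i j) (hP1 : ∀ i, HasSum (P i) 1) (x y : S) :
    Summable (fun kl : S × S => P x kl.1 * P y kl.2 * Ulim P kl.1 kl.2) :=
  Summable.of_nonneg_of_le
    (fun kl => mul_nonneg (mul_nonneg (hP0 x kl.1) (hP0 y kl.2))
      (Ulim_nonneg hP0 kl.1 kl.2))
    (fun kl => mul_le_of_le_one_right (mul_nonneg (hP0 x kl.1) (hP0 y kl.2))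
      (Ulim_le_one hP0 hP1 kl.1 kl.2))
    (prodker_summable hP0 hP1 x y)

lemma Ulim_harmonic_offdiag (hP0 : ∀ i j, 0 ≤ P i j) (hP1 : ∀ i, HasSum (P i) 1)
    {x y : S} (hxy : x ≠ y) :
    Ulim P x y = ∑' kl : S × S, P x kl.1 * P y kl.2 * Ulim P kl.1 kl.2 := by
  have h1 : Tendsto (fun n => ucoup P (n + 1) x y) atTop (𝓝 (Ulim P x y)) :=
    (ucoup_tendsto hP0 hP1 x y).comp (tendsto_add_atTop_nat 1)
  have h2 : (fun n => ucoup P (n + 1) x y)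
      = fun n => ∑' kl : S × S, P x kl.1 * P y kl.2 * ucoup P n kl.1 kl.2 :=
    funext fun n => by simp only [ucoup, if_neg hxy]
  have h3 : Tendsto (fun n => ∑' kl : S × S, P x kl.1 * P y kl.2 * ucoup P n kl.1 kl.2)
      atTop (𝓝 (∑' kl : S × S, P x kl.1 * P y kl.2 * Ulim P kl.1 kl.2)) := by
    refine tendsto_tsum_of_dominated_convergence
      (bound := fun kl : S × S => P x kl.1 * P y kl.2)
      (prodker_summable hP0 hP1 x y) (fun kl => ?_) ?_
    · exact (ucoup_tendsto hP0 hP1 kl.1 kl.2).const_mul _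
    · refine Eventually.of_forall fun n kl => ?_
      rw [Real.norm_eq_abs, abs_of_nonneg (mul_nonneg
        (mul_nonneg (hP0 x kl.1) (hP0 y kl.2)) (ucoup_nonneg hP0 n kl.1 kl.2))]
      exact mul_le_of_le_one_right (mul_nonneg (hP0 x kl.1) (hP0 y kl.2))
        (ucoup_le_one hP0 hP1 n kl.1 kl.2)
  rw [h2] at h1
  exact tendsto_nhds_unique h1 h3

/-! ### the key kernel Fubini identity -/

lemma kernel_fubini (hP0 : ∀ i j, 0 ≤ P i j) (hP1 : ∀ i, HasSum (P i) 1)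
    {a b : S → ℝ} (ha : Summable a) (hb : Summable b)
    (ha0 : ∀ i, 0 ≤ a i) (hb0 : ∀ i, 0 ≤ b i) {U : S × S → ℝ}
    (hU0 : ∀ m, 0 ≤ U m) (hU1 : ∀ m, U m ≤ 1) :
    ∑' z : S × S, (a z.1 * b z.2) * (∑' m : S × S, P z.1 m.1 * P z.2 m.2 * U m)
      = ∑' m : S × S, ((∑' k, a k * P k m.1) * (∑' l, b l * P l m.2)) * U m := by
  have hker : ∀ z : S × S, Summable fun m : S × S => P z.1 m.1 * P z.2 m.2 * U m :=
    fun z => Summable.of_nonneg_of_le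
      (fun m => mul_nonneg (mul_nonneg (hP0 z.1 m.1) (hP0 z.2 m.2)) (hU0 m))
      (fun m => mul_le_of_le_one_right (mul_nonneg (hP0 z.1 m.1) (hP0 z.2 m.2)) (hU1 m))
      (prodker_summable hP0 hP1 z.1 z.2)
  have hker1 : ∀ z : S × S, (∑' m : S × S, P z.1 m.1 * P z.2 m.2 * U m) ≤ 1 := by
    intro z
    calc (∑' m : S × S, P z.1 m.1 * P z.2 m.2 * U m)
        ≤ ∑' m : S × S, P z.1 m.1 * P z.2 m.2 :=
          Summable.tsum_le_tsum (fun m => mul_le_of_le_one_right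
            (mul_nonneg (hP0 z.1 m.1) (hP0 z.2 m.2)) (hU1 m)) (hker z)
            (prodker_summable hP0 hP1 z.1 z.2)
      _ = 1 := prodker_tsum hP0 hP1 z.1 z.2
  set F : S × S → S × S → ℝ :=
    fun z m => (a z.1 * b z.2) * (P z.1 m.1 * P z.2 m.2 * U m) with hF
  have h0 : ∀ z m, 0 ≤ F z m := fun z m =>
    mul_nonneg (mul_nonneg (ha0 z.1) (hb0 z.2))
      (mul_nonneg (mul_nonneg (hP0 z.1 m.1) (hP0 z.2 m.2)) (hU0 m))
  have h1 : ∀ z, Summable (F z) := fun z => (hker z).mul_left _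
  have hFt : ∀ z, ∑' m, F z m
      = (a z.1 * b z.2) * ∑' m : S × S, P z.1 m.1 * P z.2 m.2 * U m :=
    fun z => tsum_mul_left
  have h2 : Summable fun z => ∑' m, F z m := by
    rw [show (fun z => ∑' m, F z m)
        = fun z => (a z.1 * b z.2) * ∑' m : S × S, P z.1 m.1 * P z.2 m.2 * U m
        from funext hFt]
    exact Summable.of_nonneg_of_le
      (fun z => mul_nonneg (mul_nonneg (ha0 z.1) (hb0 z.2))
        (tsum_nonneg fun m => mul_nonneg
          (mul_nonneg (hP0 z.1 m.1) (hP0 z.2 m.2)) (hU0 m)))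
      (fun z => mul_le_of_le_one_right (mul_nonneg (ha0 z.1) (hb0 z.2)) (hker1 z))
      (prodmul_summable ha hb ha0 hb0)
  have hswap : ∑' z, ∑' m, F z m = ∑' m, ∑' z, F z m := tsum_swap_nn h0 h1 h2
  have hinner : ∀ m : S × S, ∑' z, F z m
      = ((∑' k, a k * P k m.1) * (∑' l, b l * P l m.2)) * U m := by
    intro m
    have e : ∀ z : S × S, F z m
        = ((a z.1 * P z.1 m.1) * (b z.2 * P z.2 m.2)) * U m := by
      intro z; simp only [hF]; ring
    have hsa : Summable fun k => a k * P k m.1 :=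
      Summable.of_nonneg_of_le (fun k => mul_nonneg (ha0 k) (hP0 k m.1))
        (fun k => mul_le_of_le_one_right (ha0 k)
          (le_hasSum (hP1 k) m.1 fun r _ => hP0 k r)) ha
    have hsb : Summable fun l => b l * P l m.2 :=
      Summable.of_nonneg_of_le (fun l => mul_nonneg (hb0 l) (hP0 l m.2))
        (fun l => mul_le_of_le_one_right (hb0 l)
          (le_hasSum (hP1 l) m.2 fun r _ => hP0 l r)) hb
    have hG : Summable fun z : S × S => (a z.1 * P z.1 m.1) * (b z.2 * P z.2 m.2) :=
      prodmul_summable hsa hsb (fun k => mul_nonneg (ha0 k) (hP0 k m.1))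
        (fun l => mul_nonneg (hb0 l) (hP0 l m.2))
    rw [tsum_congr e, Summable.tsum_mul_right _ hG,
      prodmul_tsum hsa hsb (fun k => mul_nonneg (ha0 k) (hP0 k m.1))
        (fun l => mul_nonneg (hb0 l) (hP0 l m.2))]
  calc ∑' z : S × S, (a z.1 * b z.2) * (∑' m : S × S, P z.1 m.1 * P z.2 m.2 * U m)
      = ∑' z, ∑' m, F z m := tsum_congr fun z => (hFt z).symm
    _ = ∑' m, ∑' z, F z m := hswap
    _ = ∑' m : S × S, ((∑' k, a k * P k m.1) * (∑' l, b l * P l m.2)) * U m :=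
        tsum_congr hinner

/-! ### stationarity -/

section Stationary
variable (π : S → ℝ)

lemma summable_pi_nstep (hP0 : ∀ i j, 0 ≤ P i j) (hP1 : ∀ i, HasSum (P i) 1)
    (hπ0 : ∀ i, 0 ≤ π i) (hπ1 : HasSum π 1) (n : ℕ) (j : S) :
    Summable fun i => π i * nstep P n i j :=
  Summable.of_nonneg_of_le (fun i => mul_nonneg (hπ0 i) (nstep_nonneg hP0 n i j))
    (fun i => mul_le_of_le_one_right (hπ0 i) (nstep_le_one hP0 hP1 n i j))
    hπ1.summable

lemma stat_nstep (hP0 : ∀ i j, 0 ≤ P i j) (hP1 : ∀ i, HasSum (P i) 1)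
    (hπ0 : ∀ i, 0 ≤ π i) (hπ1 : HasSum π 1)
    (hstat : ∀ j, ∑' i, π i * P i j = π j) :
    ∀ (n : ℕ) (j : S), ∑' i, π i * nstep P n i j = π j := by
  intro n
  induction n with
  | zero =>
      intro j
      rw [tsum_eq_single j (fun i hi => by simp [nstep, hi])]
      simp [nstep]
  | succ n ih =>
      intro j
      have e : ∀ i, π i * nstep P (n + 1) i j
          = ∑' k, π i * (nstep P n i k * P k j) := by
        intro i
        rw [tsum_mul_left]
        rfl
      rw [tsum_congr e]
      have h0 : ∀ i k, 0 ≤ π i * (nstep P n i k * P k j) := fun i k =>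
        mul_nonneg (hπ0 i) (mul_nonneg (nstep_nonneg hP0 n i k) (hP0 k j))
      have h1 : ∀ i, Summable fun k => π i * (nstep P n i k * P k j) := by
        intro i
        refine Summable.mul_left _ (Summable.of_nonneg_of_le
          (fun k => mul_nonneg (nstep_nonneg hP0 n i k) (hP0 k j))
          (fun k => mul_le_of_le_one_right (nstep_nonneg hP0 n i k)
            (le_hasSum (hP1 k) j fun r _ => hP0 k r))
          (nstep_summable hP0 hP1 n i))
      have h2 : Summable fun i => ∑' k, π i * (nstep P n i k * P k j) := by
        rw [show (fun i => ∑' k, π i * (nstep P n i k * P k j))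
            = fun i => π i * nstep P (n + 1) i j from funext fun i => (e i).symm]
        exact summable_pi_nstep π hP0 hP1 hπ0 hπ1 (n + 1) j
      rw [tsum_swap_nn h0 h1 h2]
      have hinner : ∀ k, ∑' i, π i * (nstep P n i k * P k j) = π k * P k j := by
        intro k
        have e2 : ∀ i, π i * (nstep P n i k * P k j) = (π i * nstep P n i k) * P k j :=
          fun i => by ring
        rw [tsum_congr e2,
          Summable.tsum_mul_right _ (summable_pi_nstep π hP0 hP1 hπ0 hπ1 n k), ih k]
      rw [tsum_congr hinner, hstat j]

lemma pi_pos (hP0 : ∀ i j, 0 ≤ P i j) (hP1 : ∀ i, HasSum (P i) 1)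
    (hirr : ∀ i j : S, ∃ n : ℕ, 1 ≤ n ∧ 0 < nstep P n i j)
    (hπ0 : ∀ i, 0 ≤ π i) (hπ1 : HasSum π 1)
    (hstat : ∀ j, ∑' i, π i * P i j = π j) (j : S) : 0 < π j := by
  have hex : ∃ i, 0 < π i := by
    by_contra h
    push_neg at h
    have : (1 : ℝ) ≤ 0 := by
      rw [← hπ1.tsum_eq]
      calc ∑' i, π i ≤ ∑' i, (0 : ℝ) :=
            Summable.tsum_le_tsum (fun i => le_antisymm (h i) (hπ0 i) ▸ le_refl _)
              hπ1.summable summable_zero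
        _ = 0 := tsum_zero
    linarith
  obtain ⟨i0, hi0⟩ := hex
  obtain ⟨n, _, hn⟩ := hirr i0 j
  have hterm : 0 < π i0 * nstep P n i0 j := mul_pos hi0 hn
  have hle : π i0 * nstep P n i0 j ≤ ∑' i, π i * nstep P n i j :=
    Summable.le_tsum (summable_pi_nstep π hP0 hP1 hπ0 hπ1 n j) i0
      (fun i _ => mul_nonneg (hπ0 i) (nstep_nonneg hP0 n i j))
  rw [stat_nstep π hP0 hP1 hπ0 hπ1 hstat n j] at hle
  linarith

/-! ### Ulim is harmonic and vanishes -/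

lemma Ulim_harmonic (hP0 : ∀ i j, 0 ≤ P i j) (hP1 : ∀ i, HasSum (P i) 1)
    (hirr : ∀ i j : S, ∃ n : ℕ, 1 ≤ n ∧ 0 < nstep P n i j)
    (hπ0 : ∀ i, 0 ≤ π i) (hπ1 : HasSum π 1)
    (hstat : ∀ j, ∑' i, π i * P i j = π j) :
    ∀ x y : S, Ulim P x y = ∑' kl : S × S, P x kl.1 * P y kl.2 * Ulim P kl.1 kl.2 := by
  set U : S × S → ℝ := fun m => Ulim P m.1 m.2 with hU
  set Q : S × S → ℝ := fun z => ∑' m : S × S, P z.1 m.1 * P z.2 m.2 * U m with hQ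
  have hU0 : ∀ m, 0 ≤ U m := fun m => Ulim_nonneg hP0 m.1 m.2
  have hU1 : ∀ m, U m ≤ 1 := fun m => Ulim_le_one hP0 hP1 m.1 m.2
  have hQ0 : ∀ z, 0 ≤ Q z := fun z => tsum_nonneg fun m =>
    mul_nonneg (mul_nonneg (hP0 z.1 m.1) (hP0 z.2 m.2)) (hU0 m)
  have hUQ : ∀ z : S × S, U z ≤ Q z := by
    intro z
    by_cases hz : z.1 = z.2
    · have : U z = 0 := by
        simp only [hU]
        rw [hz]
        exact Ulim_diag z.2
      rw [this]; exact hQ0 z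
    · exact (Ulim_harmonic_offdiag hP0 hP1 hz).le
  have hQ1 : ∀ z, Q z ≤ 1 := by
    intro z
    calc Q z ≤ ∑' m : S × S, P z.1 m.1 * P z.2 m.2 :=
          Summable.tsum_le_tsum (fun m => mul_le_of_le_one_right
            (mul_nonneg (hP0 z.1 m.1) (hP0 z.2 m.2)) (hU1 m))
            (Ulim_summand_summable hP0 hP1 z.1 z.2)
            (prodker_summable hP0 hP1 z.1 z.2)
      _ ≤ 1 := by
          have h := prodker_summable hP0 hP1 z.1 z.2
          calc ∑' m : S × S, P z.1 m.1 * P z.2 m.2 = 1 * 1 := by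
                have e : ∑' m : S × S, P z.1 m.1 * P z.2 m.2
                    = (∑' k, P z.1 k) * (∑' l, P z.2 l) :=
                  prodmul_summable (hP1 z.1).summable (hP1 z.2).summable
                    (hP0 z.1) (hP0 z.2) |> fun _ => by
                      rw [Summable.tsum_prod (prodmul_summable (hP1 z.1).summable
                        (hP1 z.2).summable (hP0 z.1) (hP0 z.2))]
                      simp_rw [tsum_mul_left]
                      rw [Summable.tsum_mul_right _ (hP1 z.1).summable]
                rw [e, (hP1 z.1).tsum_eq, (hP1 z.2).tsum_eq]
            _ ≤ 1 := by norm_num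
  -- global balance
  have hππQ : Summable fun z : S × S => (π z.1 * π z.2) * Q z :=
    Summable.of_nonneg_of_le
      (fun z => mul_nonneg (mul_nonneg (hπ0 z.1) (hπ0 z.2)) (hQ0 z))
      (fun z => mul_le_of_le_one_right (mul_nonneg (hπ0 z.1) (hπ0 z.2)) (hQ1 z))
      (prodmul_summable hπ1.summable hπ1.summable hπ0 hπ0)
  have hππU : Summable fun z : S × S => (π z.1 * π z.2) * U z :=
    Summable.of_nonneg_of_le
      (fun z => mul_nonneg (mul_nonneg (hπ0 z.1) (hπ0 z.2)) (hU0 z))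
      (fun z => mul_le_of_le_one_right (mul_nonneg (hπ0 z.1) (hπ0 z.2)) (hU1 z))
      (prodmul_summable hπ1.summable hπ1.summable hπ0 hπ0)
  have hbal : ∑' z : S × S, (π z.1 * π z.2) * Q z
      = ∑' z : S × S, (π z.1 * π z.2) * U z := by
    have h := kernel_fubini hP0 hP1 hπ1.summable hπ1.summable hπ0 hπ0 hU0 hU1
    have e : ∀ m : S × S, ((∑' k, π k * P k m.1) * (∑' l, π l * P l m.2)) * U m
        = (π m.1 * π m.2) * U m := by
      intro m
      rw [hstat m.1, hstat m.2]
    rw [← tsum_congr e, ← h]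
  have hzero : ∀ z : S × S, (π z.1 * π z.2) * (Q z - U z) = 0 := by
    have hsub : Summable fun z : S × S => (π z.1 * π z.2) * (Q z - U z) := by
      have e : (fun z : S × S => (π z.1 * π z.2) * (Q z - U z))
          = fun z => (π z.1 * π z.2) * Q z - (π z.1 * π z.2) * U z := by
        funext z; ring
      rw [e]; exact hππQ.sub hππU
    have htsum : ∑' z : S × S, (π z.1 * π z.2) * (Q z - U z) = 0 := by
      have e : (fun z : S × S => (π z.1 * π z.2) * (Q z - U z))
          = fun z => (π z.1 * π z.2) * Q z - (π z.1 * π z.2) * U z := by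
        funext z; ring
      rw [e, Summable.tsum_sub hππQ hππU, hbal, sub_self]
    intro z
    have hnn : ∀ w : S × S, 0 ≤ (π w.1 * π w.2) * (Q w - U w) := fun w =>
      mul_nonneg (mul_nonneg (hπ0 w.1) (hπ0 w.2)) (sub_nonneg.2 (hUQ w))
    have hle := Summable.le_tsum hsub z (fun w _ => hnn w)
    rw [htsum] at hle
    exact le_antisymm hle (hnn z)
  intro x y
  have hz := hzero (x, y)
  have hππpos : 0 < π x * π y :=
    mul_pos (pi_pos π hP0 hP1 hirr hπ0 hπ1 hstat x) (pi_pos π hP0 hP1 hirr hπ0 hπ1 hstat y)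
  have : Q (x, y) - U (x, y) = 0 := by
    rcases mul_eq_zero.mp hz with h | h
    · exact absurd h hππpos.ne'
    · exact h
  have hQU : U (x, y) = Q (x, y) := by linarith [sub_eq_zero.mp this]
  exact hQU

end Stationary

/-! ### n-step harmonicity and vanishing of `Ulim` -/

lemma Ulim_nstep_harmonic (π : S → ℝ) (hP0 : ∀ i j, 0 ≤ P i j) (hP1 : ∀ i, HasSum (P i) 1)
    (hirr : ∀ i j : S, ∃ n : ℕ, 1 ≤ n ∧ 0 < nstep P n i j)
    (hπ0 : ∀ i, 0 ≤ π i) (hπ1 : HasSum π 1)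
    (hstat : ∀ j, ∑' i, π i * P i j = π j) :
    ∀ (n : ℕ) (x y : S),
      Ulim P x y = ∑' m : S × S, nstep P n x m.1 * nstep P n y m.2 * Ulim P m.1 m.2 := by
  intro n
  induction n with
  | zero =>
      intro x y
      rw [tsum_eq_single ((x, y) : S × S) ?side]
      · simp [nstep]
      case side =>
        intro m hm
        by_cases h1 : x = m.1
        · by_cases h2 : y = m.2
          · exact absurd (Prod.ext h1.symm h2.symm) hm
          · simp [nstep, h2]
        · simp [nstep, h1]
  | succ n ih =>
      intro x y
      have harm := Ulim_harmonic π hP0 hP1 hirr hπ0 hπ1 hstat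
      have hU0 : ∀ m : S × S, 0 ≤ Ulim P m.1 m.2 := fun m => Ulim_nonneg hP0 m.1 m.2
      have hU1 : ∀ m : S × S, Ulim P m.1 m.2 ≤ 1 := fun m => Ulim_le_one hP0 hP1 m.1 m.2
      calc Ulim P x y
          = ∑' z : S × S, nstep P n x z.1 * nstep P n y z.2 * Ulim P z.1 z.2 := ih x y
        _ = ∑' z : S × S, (nstep P n x z.1 * nstep P n y z.2) *
              (∑' m : S × S, P z.1 m.1 * P z.2 m.2 * Ulim P m.1 m.2) := by
            refine tsum_congr fun z => ?_
            rw [← harm z.1 z.2]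
        _ = ∑' m : S × S, ((∑' k, nstep P n x k * P k m.1) *
              (∑' l, nstep P n y l * P l m.2)) * Ulim P m.1 m.2 :=
            kernel_fubini hP0 hP1 (nstep_summable hP0 hP1 n x) (nstep_summable hP0 hP1 n y)
              (nstep_nonneg hP0 n x) (nstep_nonneg hP0 n y) hU0 hU1
        _ = ∑' m : S × S, nstep P (n+1) x m.1 * nstep P (n+1) y m.2 * Ulim P m.1 m.2 :=
            tsum_congr fun m => rfl

lemma Ulim_eq_zero (π : S → ℝ) (hP0 : ∀ i j, 0 ≤ P i j) (hP1 : ∀ i, HasSum (P i) 1)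
    (hirr : ∀ i j : S, ∃ n : ℕ, 1 ≤ n ∧ 0 < nstep P n i j)
    (haper : ∀ i : S, ∀ d : ℕ, (∀ n : ℕ, 1 ≤ n → 0 < nstep P n i i → d ∣ n) → d = 1)
    (hπ0 : ∀ i, 0 ≤ π i) (hπ1 : HasSum π 1)
    (hstat : ∀ j, ∑' i, π i * P i j = π j) (k l : S) : Ulim P k l = 0 := by
  obtain ⟨N1, h1⟩ := eventually_pos hP0 hP1 hirr haper k k
  obtain ⟨N2, h2⟩ := eventually_pos hP0 hP1 hirr haper k l
  set n := max N1 N2 with hn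
  have hp1 : 0 < nstep P n k k := h1 n (le_max_left _ _)
  have hp2 : 0 < nstep P n k l := h2 n (le_max_right _ _)
  have hrep := Ulim_nstep_harmonic π hP0 hP1 hirr hπ0 hπ1 hstat n k k
  rw [Ulim_diag k] at hrep
  have hsum : Summable fun m : S × S => nstep P n k m.1 * nstep P n k m.2 * Ulim P m.1 m.2 :=
    Summable.of_nonneg_of_le
      (fun m => mul_nonneg (mul_nonneg (nstep_nonneg hP0 n k m.1)
        (nstep_nonneg hP0 n k m.2)) (Ulim_nonneg hP0 m.1 m.2))
      (fun m => mul_le_of_le_one_right (mul_nonneg (nstep_nonneg hP0 n k m.1)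
        (nstep_nonneg hP0 n k m.2)) (Ulim_le_one hP0 hP1 m.1 m.2))
      (prodmul_summable (nstep_summable hP0 hP1 n k) (nstep_summable hP0 hP1 n k)
        (nstep_nonneg hP0 n k) (nstep_nonneg hP0 n k))
  have hterm : nstep P n k k * nstep P n k l * Ulim P k l
      ≤ ∑' m : S × S, nstep P n k m.1 * nstep P n k m.2 * Ulim P m.1 m.2 :=
    Summable.le_tsum hsum ((k, l) : S × S) fun m _ =>
      mul_nonneg (mul_nonneg (nstep_nonneg hP0 n k m.1) (nstep_nonneg hP0 n k m.2))
        (Ulim_nonneg hP0 m.1 m.2)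
  rw [← hrep] at hterm
  have hnn : 0 ≤ nstep P n k k * nstep P n k l * Ulim P k l :=
    mul_nonneg (mul_nonneg hp1.le hp2.le) (Ulim_nonneg hP0 k l)
  have hzero : nstep P n k k * nstep P n k l * Ulim P k l = 0 := le_antisymm hterm hnn
  rcases mul_eq_zero.mp hzero with h | h
  · exact absurd h (mul_pos hp1 hp2).ne'
  · exact h

end MCAux

open MCAux in
/-- Convergence theorem for Markov chains: for an irreducible, aperiodic Markov
chain on a countable state space admitting a stationary probability distribution
`π` (hence positive recurrent), the `n`-step transition distributions converge
to `π` in total variation from every starting state. -/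
theorem convergence_to_stationary
    {S : Type*} [Countable S] [DecidableEq S] (P : S → S → ℝ)
    (hPnn : ∀ i j, 0 ≤ P i j)
    (hstoch : ∀ i, HasSum (P i) 1)
    (hirr : ∀ i j : S, ∃ n : ℕ, 1 ≤ n ∧ 0 < nstep P n i j)
    (haper : ∀ i : S, ∀ d : ℕ,
      (∀ n : ℕ, 1 ≤ n → 0 < nstep P n i i → d ∣ n) → d = 1)
    (π : S → ℝ) (hπ0 : ∀ i, 0 ≤ π i) (hπ1 : HasSum π 1)
    (hstat : ∀ j, ∑' i, π i * P i j = π j) :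
    ∀ x : S,
      Tendsto (fun n => (∑' j, |nstep P n x j - π j|) / 2) atTop (𝓝 0) := by
  intro x
  -- pointwise decomposition of the deviation from stationarity
  have hstep1 : ∀ (n : ℕ) (j : S),
      nstep P n x j - π j = ∑' y, π y * (nstep P n x j - nstep P n y j) := by
    intro n j
    have ha : Summable fun y => π y * nstep P n x j := hπ1.summable.mul_right _
    have hb : Summable fun y => π y * nstep P n y j :=
      summable_pi_nstep π hPnn hstoch hπ0 hπ1 n j
    calc nstep P n x j - π j
        = (∑' y, π y * nstep P n x j) - ∑' y, π y * nstep P n y j := by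
          rw [tsum_mul_right, hπ1.tsum_eq, one_mul,
            stat_nstep π hPnn hstoch hπ0 hπ1 hstat n j]
      _ = ∑' y, (π y * nstep P n x j - π y * nstep P n y j) := (Summable.tsum_sub ha hb).symm
      _ = ∑' y, π y * (nstep P n x j - nstep P n y j) :=
          tsum_congr fun y => (mul_sub _ _ _).symm
  have habsb : ∀ (n : ℕ) (j y : S), |nstep P n x j - nstep P n y j| ≤ 1 := by
    intro n j y
    refine abs_le.2 ⟨?_, ?_⟩
    · have h1 := nstep_nonneg hPnn n x j
      have h2 := nstep_le_one hPnn hstoch n y j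
      linarith
    · have h1 := nstep_le_one hPnn hstoch n x j
      have h2 := nstep_nonneg hPnn n y j
      linarith
  have hstep2 : ∀ (n : ℕ) (j : S),
      |nstep P n x j - π j| ≤ ∑' y, π y * |nstep P n x j - nstep P n y j| := by
    intro n j
    rw [hstep1 n j]
    have hnorm : Summable fun y => ‖π y * (nstep P n x j - nstep P n y j)‖ := by
      refine Summable.of_nonneg_of_le (fun y => norm_nonneg _) (fun y => ?_) hπ1.summable
      rw [Real.norm_eq_abs, abs_mul, abs_of_nonneg (hπ0 y)]
      exact mul_le_of_le_one_right (hπ0 y) (habsb n j y)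
    calc |∑' y, π y * (nstep P n x j - nstep P n y j)|
        ≤ ∑' y, ‖π y * (nstep P n x j - nstep P n y j)‖ := by
          rw [← Real.norm_eq_abs]
          exact norm_tsum_le_tsum_norm hnorm
      _ = ∑' y, π y * |nstep P n x j - nstep P n y j| :=
          tsum_congr fun y => by rw [Real.norm_eq_abs, abs_mul, abs_of_nonneg (hπ0 y)]
  -- Fubini data for F y j := π y * |A x j - A y j|
  have key : ∀ n : ℕ, (∑' j, |nstep P n x j - π j|)
      ≤ ∑' y, π y * (2 * ucoup P n x y) := by
    intro n
    have hF0 : ∀ y j, 0 ≤ π y * |nstep P n x j - nstep P n y j| :=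
      fun y j => mul_nonneg (hπ0 y) (abs_nonneg _)
    have hF1 : ∀ y, Summable fun j => π y * |nstep P n x j - nstep P n y j| :=
      fun y => (summable_absdiff hPnn hstoch n x y).mul_left _
    have hFt : ∀ y, ∑' j, π y * |nstep P n x j - nstep P n y j|
        = π y * ∑' j, |nstep P n x j - nstep P n y j| := fun y => tsum_mul_left
    have hF2 : Summable fun y => ∑' j, π y * |nstep P n x j - nstep P n y j| := by
      rw [show (fun y => ∑' j, π y * |nstep P n x j - nstep P n y j|)
          = fun y => π y * ∑' j, |nstep P n x j - nstep P n y j| from funext hFt]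
      refine Summable.of_nonneg_of_le
        (fun y => mul_nonneg (hπ0 y) (tsum_nonneg fun j => abs_nonneg _))
        (fun y => mul_le_mul_of_nonneg_left (tsum_absdiff_le_two hPnn hstoch n x y) (hπ0 y))
        (hπ1.summable.mul_right 2)
    have hF2' : Summable fun y => π y * ∑' j, |nstep P n x j - nstep P n y j| := by
      rw [← show (fun y => ∑' j, π y * |nstep P n x j - nstep P n y j|)
          = fun y => π y * ∑' j, |nstep P n x j - nstep P n y j| from funext hFt]
      exact hF2
    have hLHSsum : Summable fun j => |nstep P n x j - π j| := by
      refine Summable.of_nonneg_of_le (fun j => abs_nonneg _) (fun j => ?_)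
        ((nstep_summable hPnn hstoch n x).add hπ1.summable)
      calc |nstep P n x j - π j| ≤ |nstep P n x j| + |π j| := by
            rw [sub_eq_add_neg]; exact (abs_add_le _ _).trans (by rw [abs_neg])
        _ = nstep P n x j + π j := by
            rw [abs_of_nonneg (nstep_nonneg hPnn n x j), abs_of_nonneg (hπ0 j)]
    calc (∑' j, |nstep P n x j - π j|)
        ≤ ∑' j, ∑' y, π y * |nstep P n x j - nstep P n y j| :=
          Summable.tsum_le_tsum (hstep2 n) hLHSsum (summable_snd_nn hF0 hF1 hF2)
      _ = ∑' y, ∑' j, π y * |nstep P n x j - nstep P n y j| :=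
          (tsum_swap_nn hF0 hF1 hF2).symm
      _ = ∑' y, π y * ∑' j, |nstep P n x j - nstep P n y j| := tsum_congr hFt
      _ ≤ ∑' y, π y * (2 * ucoup P n x y) := by
          refine Summable.tsum_le_tsum (fun y => ?_) hF2' ?_
          · exact mul_le_mul_of_nonneg_left (coupling_ineq hPnn hstoch n x y) (hπ0 y)
          · refine Summable.of_nonneg_of_le
              (fun y => mul_nonneg (hπ0 y)
                (mul_nonneg (by norm_num) (ucoup_nonneg hPnn n x y)))
              (fun y => mul_le_mul_of_nonneg_left ?_ (hπ0 y))
              (hπ1.summable.mul_right 2)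
            have := ucoup_le_one hPnn hstoch n x y
            linarith
  -- the dominating sequence tends to zero
  have htend : Tendsto (fun n => ∑' y, π y * (2 * ucoup P n x y)) atTop (𝓝 0) := by
    have h := tendsto_tsum_of_dominated_convergence
      (f := fun (n : ℕ) (y : S) => π y * (2 * ucoup P n x y))
      (g := fun _ => (0 : ℝ)) (bound := fun y => π y * 2)
      (hπ1.summable.mul_right 2)
      (fun y => by
        have h1 : Tendsto (fun n => ucoup P n x y) atTop (𝓝 (Ulim P x y)) :=
          ucoup_tendsto hPnn hstoch x y
        rw [Ulim_eq_zero π hPnn hstoch hirr haper hπ0 hπ1 hstat x y] at h1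
        have h2 := (h1.const_mul (2 : ℝ)).const_mul (π y)
        simpa using h2)
      (Eventually.of_forall fun n y => by
        rw [Real.norm_eq_abs, abs_of_nonneg (mul_nonneg (hπ0 y)
          (mul_nonneg (by norm_num) (ucoup_nonneg hPnn n x y)))]
        refine mul_le_mul_of_nonneg_left ?_ (hπ0 y)
        have := ucoup_le_one hPnn hstoch n x y
        linarith)
    simpa using h
  -- squeeze
  have htend2 : Tendsto (fun n => (∑' y, π y * (2 * ucoup P n x y)) / 2) atTop (𝓝 0) := by
    have := htend.div_const 2
    simpa using this
  refine squeeze_zero (fun n => ?_) (fun n => ?_) htend2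
  · exact div_nonneg (tsum_nonneg fun j => abs_nonneg _) (by norm_num)
  · exact div_le_div_of_nonneg_right (key n) (by norm_num) |>.trans (le_refl _)
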